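/- For m ≥ 3, 2 ≤ k ≤ m, and δ ≥ 0 there exists a constant C > 0, independent of the gluing parameter a with 0 < |a| < 1/2, such that ⦀q·p⦀_{k,−δ} ≤ C·e^{δR/2}·⦀q⦀_{m,−δ}·⦀p⦀_{k,−δ} for all q ∈ H^m(Z_a,ℝ) and p ∈ H^k(Z_a,ℝ), where R = φ(|a|). -/

import Mathlib

open Filter MeasureTheory

noncomputable section

/-- square of the weighted Sobolev norm `⦀q⦀²_{k,−δ}` on the finite glued cylinder
`Z_a ≅ [0,R] × S¹` (functions on `ℝ²`, 1-periodic in the second variable), with weight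
`e^{−2δ|s − R/2|}` -/
def zNormSq (k : ℕ) (δ R : ℝ) (q : ℝ × ℝ → ℝ) : ℝ :=
  ∑ j ∈ Finset.range (k + 1),
    ∫ x in Set.Ioo (0 : ℝ) R ×ˢ Set.Ioo (0 : ℝ) 1,
      ‖iteratedFDeriv ℝ j q x‖ ^ 2 * Real.exp (-2 * δ * |x.1 - R / 2|)

/-- membership in `H^k(Z_a)` (smooth representatives with finite weighted integrals) -/
def memZ (k : ℕ) (δ R : ℝ) (q : ℝ × ℝ → ℝ) : Prop :=
  ContDiff ℝ (k : ℕ∞) q ∧ (∀ s t : ℝ, q (s, t + 1) = q (s, t)) ∧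
    ∀ j ≤ k, IntegrableOn
      (fun x => ‖iteratedFDeriv ℝ j q x‖ ^ 2 * Real.exp (-2 * δ * |x.1 - R / 2|))
      (Set.Ioo (0 : ℝ) R ×ˢ Set.Ioo (0 : ℝ) 1)

open Set

set_option maxHeartbeats 1000000

section Aux

instance clmNormedAddCommGroup2 {E₁ E₂ E₃ : Type*} [NormedAddCommGroup E₁] [NormedSpace ℝ E₁]
    [NormedAddCommGroup E₂] [NormedSpace ℝ E₂] [NormedAddCommGroup E₃] [NormedSpace ℝ E₃] :
    NormedAddCommGroup (E₁ →L[ℝ] E₂ →L[ℝ] E₃) := ContinuousLinearMap.toNormedAddCommGroup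

variable {E : Type*} [NormedAddCommGroup E] [NormedSpace ℝ E] [CompleteSpace E]

lemma l1d (f f' : ℝ → E) (c : ℝ) (hf : ∀ σ ∈ Icc c (c+1), HasDerivAt f (f' σ) σ)
    (hf' : ContinuousOn f' (Icc c (c+1))) {s₀ : ℝ} (hs : s₀ ∈ Icc c (c+1)) :
    ‖f s₀‖ ≤ (∫ σ in Ioo c (c+1), ‖f σ‖) + ∫ σ in Ioo c (c+1), ‖f' σ‖ := by
  have hfc : ContinuousOn f (Icc c (c+1)) :=
    fun σ hσ => (hf σ hσ).continuousAt.continuousWithinAt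
  have hK : IntegrableOn (fun σ => ‖f' σ‖) (Icc c (c+1)) :=
    (hf'.norm).integrableOn_compact isCompact_Icc
  have hfI : IntegrableOn (fun σ => ‖f σ‖) (Ioo c (c+1)) :=
    ((hfc.norm).integrableOn_compact isCompact_Icc).mono_set Ioo_subset_Icc_self
  set K : ℝ := ∫ σ in Icc c (c+1), ‖f' σ‖ with hKdef
  have hvol : (volume (Ioo c (c+1))).toReal = 1 := by simp
  have hcI : IntegrableOn (fun _ : ℝ => K) (Ioo c (c+1)) := by
    exact integrableOn_const (by simp)
  have key : ∀ σ ∈ Ioo c (c+1), ‖f s₀‖ ≤ ‖f σ‖ + K := by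
    intro σ hσ
    have hσ' : σ ∈ Icc c (c+1) := Ioo_subset_Icc_self hσ
    have hsub : uIcc σ s₀ ⊆ Icc c (c+1) := uIcc_subset_Icc hσ' hs
    have hftc : ∫ τ in σ..s₀, f' τ = f s₀ - f σ := by
      apply intervalIntegral.integral_eq_sub_of_hasDerivAt
      · exact fun τ hτ => hf τ (hsub hτ)
      · exact (hf'.mono hsub).intervalIntegrable
    have h1 : ‖f s₀ - f σ‖ ≤ K := by
      rw [← hftc]
      refine le_trans (intervalIntegral.norm_integral_le_integral_norm_uIoc) ?_
      apply setIntegral_mono_set hK (ae_of_all _ fun τ => norm_nonneg _)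
      exact HasSubset.Subset.eventuallyLE
        (Ioc_subset_Icc_self.trans (Icc_subset_Icc (le_min hσ'.1 hs.1) (max_le hσ'.2 hs.2)))
    calc ‖f s₀‖ = ‖f σ + (f s₀ - f σ)‖ := by rw [add_sub_cancel]
      _ ≤ ‖f σ‖ + ‖f s₀ - f σ‖ := norm_add_le _ _
      _ ≤ ‖f σ‖ + K := by linarith
  have h2 : ‖f s₀‖ ≤ ∫ σ in Ioo c (c+1), (‖f σ‖ + K) := by
    have hm := setIntegral_mono_on (integrableOn_const (by simp))
      (hfI.add hcI) measurableSet_Ioo key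
    calc ‖f s₀‖ = ∫ _ in Ioo c (c+1), ‖f s₀‖ := by rw [setIntegral_const, measureReal_def, hvol, one_smul]
      _ ≤ _ := hm
  have h3 : (∫ σ in Ioo c (c+1), (‖f σ‖ + K)) = (∫ σ in Ioo c (c+1), ‖f σ‖) + K := by
    rw [integral_add hfI hcI, setIntegral_const, measureReal_def, hvol, one_smul]
  refine (h2.trans_eq h3).trans ?_
  rw [hKdef, integral_Icc_eq_integral_Ioo]

lemma fubini_Ioo (h : ℝ × ℝ → ℝ) (hc : Continuous h) (c d : ℝ) :
    ∫ t in Ioo d (d+1), ∫ σ in Ioo c (c+1), h (σ, t) =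
      ∫ x in Ioo c (c+1) ×ˢ Ioo d (d+1), h x := by
  have hint : Integrable h ((volume.restrict (Ioo c (c+1))).prod
      (volume.restrict (Ioo d (d+1)))) := by
    rw [Measure.prod_restrict]
    exact ((hc.continuousOn).integrableOn_compact (isCompact_Icc.prod isCompact_Icc)).mono_set
      (prod_mono Ioo_subset_Icc_self Ioo_subset_Icc_self)
  have hswap := integral_integral_swap (f := fun σ t => h (σ, t))
    (μ := volume.restrict (Ioo c (c+1))) (ν := volume.restrict (Ioo d (d+1))) hint
  rw [← hswap, ← integral_prod _ hint, Measure.prod_restrict]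
  rw [Measure.volume_eq_prod]

lemma norm_pair_le (a b : ℝ) (ha : |a| ≤ 1) (hb : |b| ≤ 1) : ‖((a,b) : ℝ × ℝ)‖ ≤ 1 := by
  rw [Prod.norm_def]
  simp [Real.norm_eq_abs, ha, hb]

lemma agmon2d (v : ℝ × ℝ → E) (hv : ContDiff ℝ 2 v) (c d : ℝ) (x₀ : ℝ × ℝ)
    (h1 : x₀.1 ∈ Icc c (c+1)) (h2 : x₀.2 ∈ Icc d (d+1)) :
    ‖v x₀‖ ≤ (∫ x in Ioo c (c+1) ×ˢ Ioo d (d+1), ‖v x‖)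
      + 2 * (∫ x in Ioo c (c+1) ×ˢ Ioo d (d+1), ‖fderiv ℝ v x‖)
      + ∫ x in Ioo c (c+1) ×ˢ Ioo d (d+1), ‖fderiv ℝ (fderiv ℝ v) x‖ := by
  set Fv := fderiv ℝ v with hFv
  have hv1 : ContDiff ℝ 1 Fv := hv.fderiv_right (m := 1) (by norm_num)
  have hvd : Differentiable ℝ v := hv.differentiable (by norm_num)
  have hFvd : Differentiable ℝ Fv := hv1.differentiable (by norm_num)
  have hvc : Continuous v := hv.continuous
  have hFvc : Continuous Fv := hv1.continuous
  have hFFvc : Continuous (fderiv ℝ Fv) := (hv1.fderiv_right (m := 0) (by norm_num)).continuous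
  set φ : ℝ × ℝ → E := fun x => Fv x ((0:ℝ), (1:ℝ)) with hφ
  have hφc : Continuous φ := by
    exact (ContinuousLinearMap.apply ℝ E ((0:ℝ),(1:ℝ))).continuous.comp hFvc
  -- derivative facts along lines
  have hline1 : ∀ (t σ : ℝ), HasDerivAt (fun σ => v (σ, t)) (Fv (σ, t) (1, 0)) σ := by
    intro t σ
    exact (hvd (σ, t)).hasFDerivAt.comp_hasDerivAt σ
      ((hasDerivAt_id σ).prodMk (hasDerivAt_const σ t))
  have hline2 : ∀ (s t : ℝ), HasDerivAt (fun t => v (s, t)) (φ (s, t)) t := by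
    intro s t
    exact (hvd (s, t)).hasFDerivAt.comp_hasDerivAt t
      ((hasDerivAt_const t s).prodMk (hasDerivAt_id t))
  have hlineφ : ∀ (t σ : ℝ),
      HasDerivAt (fun σ => φ (σ, t)) ((fderiv ℝ Fv (σ, t) (1, 0)) ((0:ℝ),(1:ℝ))) σ := by
    intro t σ
    have hFd : HasDerivAt (fun σ => Fv (σ, t)) (fderiv ℝ Fv (σ, t) (1, 0)) σ :=
      (hFvd (σ, t)).hasFDerivAt.comp_hasDerivAt σ
        ((hasDerivAt_id σ).prodMk (hasDerivAt_const σ t))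
    simpa using hFd.clm_apply (hasDerivAt_const σ ((0:ℝ),(1:ℝ)))
  -- norms of direction vectors
  have he1 : ‖((1:ℝ),(0:ℝ))‖ ≤ 1 := norm_pair_le 1 0 (by norm_num) (by norm_num)
  have he2 : ‖((0:ℝ),(1:ℝ))‖ ≤ 1 := norm_pair_le 0 1 (by norm_num) (by norm_num)
  -- pointwise bounds
  have hb1 : ∀ x : ℝ × ℝ, ‖Fv x ((1:ℝ),(0:ℝ))‖ ≤ ‖Fv x‖ := fun x => by
    calc ‖Fv x ((1:ℝ),(0:ℝ))‖ ≤ ‖Fv x‖ * ‖((1:ℝ),(0:ℝ))‖ := (Fv x).le_opNorm _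
    _ ≤ ‖Fv x‖ * 1 := mul_le_mul_of_nonneg_left he1 (norm_nonneg _)
    _ = ‖Fv x‖ := mul_one _
  have hb2 : ∀ x : ℝ × ℝ, ‖φ x‖ ≤ ‖Fv x‖ := fun x => by
    calc ‖Fv x ((0:ℝ),(1:ℝ))‖ ≤ ‖Fv x‖ * ‖((0:ℝ),(1:ℝ))‖ := (Fv x).le_opNorm _
    _ ≤ ‖Fv x‖ * 1 := mul_le_mul_of_nonneg_left he2 (norm_nonneg _)
    _ = ‖Fv x‖ := mul_one _
  have hb12 : ∀ x : ℝ × ℝ, ‖fderiv ℝ Fv x (1, 0) ((0:ℝ),(1:ℝ))‖ ≤ ‖fderiv ℝ Fv x‖ := fun x => by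
    calc ‖fderiv ℝ Fv x (1, 0) ((0:ℝ),(1:ℝ))‖
        ≤ ‖fderiv ℝ Fv x (1, 0)‖ * ‖((0:ℝ),(1:ℝ))‖ := (fderiv ℝ Fv x (1,0)).le_opNorm _
      _ ≤ (‖fderiv ℝ Fv x‖ * ‖((1:ℝ),(0:ℝ))‖) * 1 := by
          apply mul_le_mul ((fderiv ℝ Fv x).le_opNorm _) he2 (norm_nonneg _)
          positivity
      _ ≤ (‖fderiv ℝ Fv x‖ * 1) * 1 := by
          have := mul_le_mul_of_nonneg_left he1 (norm_nonneg (fderiv ℝ Fv x))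
          linarith
      _ = ‖fderiv ℝ Fv x‖ := by ring
  -- integrability helper on unit interval
  have cI : ∀ (a : ℝ) (g : ℝ → ℝ), Continuous g → IntegrableOn g (Ioo a (a+1)) := fun a g hg =>
    ((hg.continuousOn).integrableOn_compact isCompact_Icc).mono_set Ioo_subset_Icc_self
  -- step A : for each t, bound the slice values
  have hA : ∀ t, ‖v (x₀.1, t)‖ ≤
      (∫ σ in Ioo c (c+1), ‖v (σ, t)‖) + ∫ σ in Ioo c (c+1), ‖Fv (σ, t)‖ := by
    intro t
    have h := l1d (fun σ => v (σ, t)) (fun σ => Fv (σ, t) (1, 0)) c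
      (fun σ _ => hline1 t σ)
      (((ContinuousLinearMap.apply ℝ E ((1:ℝ),(0:ℝ))).continuous.comp
        (hFvc.comp (continuous_id.prodMk continuous_const))).continuousOn) h1
    refine h.trans (add_le_add_right ?_ _)
    apply setIntegral_mono_on
    · exact cI c _ (((ContinuousLinearMap.apply ℝ E ((1:ℝ),(0:ℝ))).continuous.comp
        (hFvc.comp (continuous_id.prodMk continuous_const))).norm)
    · exact cI c _ ((hFvc.comp (continuous_id.prodMk continuous_const)).norm)
    · exact measurableSet_Ioo
    · exact fun σ _ => hb1 (σ, t)
  have hB : ∀ t, ‖φ (x₀.1, t)‖ ≤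
      (∫ σ in Ioo c (c+1), ‖Fv (σ, t)‖) + ∫ σ in Ioo c (c+1), ‖fderiv ℝ Fv (σ, t)‖ := by
    intro t
    have h := l1d (fun σ => φ (σ, t)) (fun σ => fderiv ℝ Fv (σ, t) (1, 0) ((0:ℝ),(1:ℝ))) c
      (fun σ _ => hlineφ t σ)
      (((ContinuousLinearMap.apply ℝ E ((0:ℝ),(1:ℝ))).continuous.comp
        (((ContinuousLinearMap.apply ℝ (ℝ × ℝ →L[ℝ] E) ((1:ℝ),(0:ℝ))).continuous.comp
          (hFFvc.comp (continuous_id.prodMk continuous_const))))).continuousOn) h1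
    refine h.trans (add_le_add ?_ ?_)
    · apply setIntegral_mono_on
      · exact cI c _ ((hφc.comp (continuous_id.prodMk continuous_const)).norm)
      · exact cI c _ ((hFvc.comp (continuous_id.prodMk continuous_const)).norm)
      · exact measurableSet_Ioo
      · exact fun σ _ => hb2 (σ, t)
    · apply setIntegral_mono_on
      · exact cI c _ (((ContinuousLinearMap.apply ℝ E ((0:ℝ),(1:ℝ))).continuous.comp
          (((ContinuousLinearMap.apply ℝ (ℝ × ℝ →L[ℝ] E) ((1:ℝ),(0:ℝ))).continuous.comp
            (hFFvc.comp (continuous_id.prodMk continuous_const))))).norm)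
      · exact cI c _ ((hFFvc.comp (continuous_id.prodMk continuous_const)).norm)
      · exact measurableSet_Ioo
      · exact fun σ _ => hb12 (σ, t)
  -- outer application
  have houter := l1d (fun t => v (x₀.1, t)) (fun t => φ (x₀.1, t)) d
    (fun t _ => hline2 x₀.1 t)
    ((hφc.comp (continuous_const.prodMk continuous_id)).continuousOn) h2
  -- Fubini integrability
  have prodInt : ∀ h : ℝ × ℝ → ℝ, Continuous h →
      Integrable h ((volume.restrict (Ioo c (c+1))).prod (volume.restrict (Ioo d (d+1)))) := by
    intro h hc
    rw [Measure.prod_restrict]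
    exact ((hc.continuousOn).integrableOn_compact (isCompact_Icc.prod isCompact_Icc)).mono_set
      (prod_mono Ioo_subset_Icc_self Ioo_subset_Icc_self)
  have i0 : Integrable (fun t => ∫ σ in Ioo c (c+1), ‖v (σ, t)‖)
      (volume.restrict (Ioo d (d+1))) := (prodInt _ hvc.norm).integral_prod_right
  have i1 : Integrable (fun t => ∫ σ in Ioo c (c+1), ‖Fv (σ, t)‖)
      (volume.restrict (Ioo d (d+1))) := (prodInt _ hFvc.norm).integral_prod_right
  have i2 : Integrable (fun t => ∫ σ in Ioo c (c+1), ‖fderiv ℝ Fv (σ, t)‖)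
      (volume.restrict (Ioo d (d+1))) := (prodInt _ hFFvc.norm).integral_prod_right
  have m1 : (∫ t in Ioo d (d+1), ‖v (x₀.1, t)‖) ≤
      (∫ t in Ioo d (d+1), ((∫ σ in Ioo c (c+1), ‖v (σ, t)‖)
        + ∫ σ in Ioo c (c+1), ‖Fv (σ, t)‖)) := by
    apply integral_mono (cI d _ ((hvc.comp (continuous_const.prodMk continuous_id)).norm))
      (i0.add i1) (fun t => hA t)
  have m2 : (∫ t in Ioo d (d+1), ‖φ (x₀.1, t)‖) ≤
      (∫ t in Ioo d (d+1), ((∫ σ in Ioo c (c+1), ‖Fv (σ, t)‖)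
        + ∫ σ in Ioo c (c+1), ‖fderiv ℝ Fv (σ, t)‖)) := by
    apply integral_mono (cI d _ ((hφc.comp (continuous_const.prodMk continuous_id)).norm))
      (i1.add i2) (fun t => hB t)
  have e1 : (∫ t in Ioo d (d+1), ((∫ σ in Ioo c (c+1), ‖v (σ, t)‖)
        + ∫ σ in Ioo c (c+1), ‖Fv (σ, t)‖))
      = (∫ x in Ioo c (c+1) ×ˢ Ioo d (d+1), ‖v x‖)
        + ∫ x in Ioo c (c+1) ×ˢ Ioo d (d+1), ‖Fv x‖ := by
    rw [integral_add i0 i1, fubini_Ioo _ hvc.norm, fubini_Ioo _ hFvc.norm]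
  have e2 : (∫ t in Ioo d (d+1), ((∫ σ in Ioo c (c+1), ‖Fv (σ, t)‖)
        + ∫ σ in Ioo c (c+1), ‖fderiv ℝ Fv (σ, t)‖))
      = (∫ x in Ioo c (c+1) ×ˢ Ioo d (d+1), ‖Fv x‖)
        + ∫ x in Ioo c (c+1) ×ˢ Ioo d (d+1), ‖fderiv ℝ Fv x‖ := by
    rw [integral_add i1 i2, fubini_Ioo _ hFvc.norm, fubini_Ioo _ hFFvc.norm]
  have : ‖v (x₀.1, x₀.2)‖ ≤ _ := houter
  rw [Prod.mk.eta] at this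
  calc ‖v x₀‖ ≤ (∫ t in Ioo d (d+1), ‖v (x₀.1, t)‖) + ∫ t in Ioo d (d+1), ‖φ (x₀.1, t)‖ :=
        this
    _ ≤ _ := add_le_add (m1.trans_eq e1) (m2.trans_eq e2)
    _ = _ := by ring

lemma norm_fderiv_comp_isometry {F G H : Type*} [NormedAddCommGroup F] [NormedSpace ℝ F]
    [NormedAddCommGroup G] [NormedSpace ℝ G] [NormedAddCommGroup H] [NormedSpace ℝ H]
    (e : G ≃ₗᵢ[ℝ] H) (g : F → G) (x : F) (hg : DifferentiableAt ℝ g x) :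
    ‖fderiv ℝ (⇑e ∘ g) x‖ = ‖fderiv ℝ g x‖ := by
  have h : HasFDerivAt (⇑e ∘ g)
      (e.toLinearIsometry.toContinuousLinearMap.comp (fderiv ℝ g x)) x := by
    exact (e.toLinearIsometry.toContinuousLinearMap.hasFDerivAt).comp x hg.hasFDerivAt
  rw [h.fderiv, e.toLinearIsometry.norm_toContinuousLinearMap_comp]

lemma norm_fderiv_fderiv_iteratedFDeriv {F G : Type*} [NormedAddCommGroup F] [NormedSpace ℝ F]
    [NormedAddCommGroup G] [NormedSpace ℝ G] {M : ℕ} (f : F → G) (hf : ContDiff ℝ (M : ℕ∞) f)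
    (i : ℕ) (hi : i + 2 ≤ M) (x : F) :
    ‖fderiv ℝ (fderiv ℝ (iteratedFDeriv ℝ i f)) x‖ = ‖iteratedFDeriv ℝ (i+2) f x‖ := by
  have hd : DifferentiableAt ℝ (iteratedFDeriv ℝ (i+1) f) x := by
    have : ContDiff ℝ 1 (iteratedFDeriv ℝ (i+1) f) :=
      hf.iteratedFDeriv_right (by exact_mod_cast by omega)
    exact (this.differentiable (by norm_num)).differentiableAt
  rw [fderiv_iteratedFDeriv (n := i)]
  exact (norm_fderiv_comp_isometry _ _ _ hd).trans norm_fderiv_iteratedFDeriv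

lemma setIntegral_le_sqrt_sq {S : Set (ℝ × ℝ)} (h : ℝ × ℝ → ℝ) (hnn : ∀ x, 0 ≤ h x)
    (hmeas : AEStronglyMeasurable h (volume.restrict S))
    (hint : IntegrableOn (fun x => h x ^ 2) S)
    (hvol : volume S = 1) :
    ∫ x in S, h x ≤ Real.sqrt (∫ x in S, h x ^ 2) := by
  have hμ : (volume.restrict S) Set.univ = 1 := by
    rw [Measure.restrict_apply_univ]; exact hvol
  have hconst : ∀ r : ℝ, Integrable (fun _ : ℝ × ℝ => r) (volume.restrict S) := by
    intro r
    apply integrable_const_iff.2 (Or.inr ?_)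
    exact ⟨by rw [hμ]; exact ENNReal.one_lt_top⟩
  have hA : 0 ≤ ∫ x in S, h x ^ 2 := integral_nonneg (fun x => sq_nonneg _)
  set A := ∫ x in S, h x ^ 2 with hAdef
  have hIh : Integrable h (volume.restrict S) := by
    refine Integrable.mono' (g := fun x => (h x ^ 2 + 1) / 2) ?_ hmeas ?_
    · exact ((hint.add (hconst 1)).div_const 2)
    · refine Filter.Eventually.of_forall fun x => ?_
      rw [Real.norm_eq_abs, abs_of_nonneg (hnn x)]
      nlinarith [sq_nonneg (h x - 1)]
  have key : ∀ ε : ℝ, 0 < ε → (∫ x in S, h x) ≤ A / (2 * ε) + ε / 2 := by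
    intro ε hε
    have hpt : ∀ x, h x ≤ h x ^ 2 / (2 * ε) + ε / 2 := by
      intro x
      have h1 : 0 ≤ (h x - ε)^2 := sq_nonneg _
      have h2 : h x * (2 * ε) ≤ h x ^ 2 + ε ^ 2 := by nlinarith
      have e0 : h x = (2 * ε * h x) / (2 * ε) := by field_simp
      calc h x = (2 * ε * h x) / (2 * ε) := e0
        _ ≤ (h x ^ 2 + ε ^ 2) / (2 * ε) := by
            gcongr (?_ : ℝ) / (2*ε)
            nlinarith
        _ = h x ^ 2 / (2 * ε) + ε / 2 := by field_simp
    have hg : Integrable (fun x : ℝ × ℝ => h x ^ 2 / (2 * ε) + ε / 2)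
        (volume.restrict S) := by
      exact (hint.div_const _).add (hconst _)
    have hg1 : Integrable (fun x : ℝ × ℝ => h x ^ 2 / (2 * ε)) (volume.restrict S) := by
      exact hint.div_const _
    calc (∫ x in S, h x) ≤ ∫ x in S, (h x ^ 2 / (2 * ε) + ε / 2) :=
          integral_mono hIh hg hpt
      _ = A / (2 * ε) + ε / 2 := by
          rw [integral_add hg1 (hconst _), integral_div, integral_const]
          simp [hμ, measureReal_def, hvol, ← hAdef]
  rcases eq_or_lt_of_le hA with hA0 | hApos
  · have : ∀ ε : ℝ, 0 < ε → (∫ x in S, h x) ≤ 0 + ε := by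
      intro ε hε
      have := key ε hε
      rw [← hA0] at this
      simp only [zero_div] at this
      linarith
    have h0 : (∫ x in S, h x) ≤ 0 := le_of_forall_pos_le_add this
    rw [← hA0, Real.sqrt_zero]; exact h0
  · have hs : 0 < Real.sqrt A := Real.sqrt_pos.2 hApos
    have := key (Real.sqrt A) hs
    have hAA : A = Real.sqrt A * Real.sqrt A := (Real.mul_self_sqrt hA).symm
    calc (∫ x in S, h x) ≤ A / (2 * Real.sqrt A) + Real.sqrt A / 2 := this
      _ = Real.sqrt A := by
          rw [hAA]; field_simp
          nlinarith [Real.sq_sqrt hA, hAA, Real.sqrt_sq hs.le]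

lemma sup_bound (M i : ℕ) (u : ℝ × ℝ → ℝ) (δ R : ℝ) (hδ : 0 ≤ δ) (hR : 2 ≤ R)
    (hu : ContDiff ℝ (M : ℕ∞) u)
    (hint : ∀ j ≤ M, IntegrableOn
      (fun x => ‖iteratedFDeriv ℝ j u x‖ ^ 2 * Real.exp (-2 * δ * |x.1 - R / 2|))
      (Ioo (0:ℝ) R ×ˢ Ioo (0:ℝ) 1))
    (hi : i + 2 ≤ M) (x₀ : ℝ × ℝ) (hx : x₀ ∈ Ioo (0:ℝ) R ×ˢ Ioo (0:ℝ) 1) :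
    ‖iteratedFDeriv ℝ i u x₀‖ ≤
      4 * Real.exp δ * Real.exp (δ * |x₀.1 - R / 2|) * Real.sqrt (zNormSq M δ R u) := by
  obtain ⟨hx1, hx2⟩ := hx
  set c := min x₀.1 (R - 1) with hc
  have hc0 : 0 < c := lt_min hx1.1 (by linarith)
  have hcR : c + 1 ≤ R := by
    have : c ≤ R - 1 := min_le_right _ _
    linarith
  have hmem1 : x₀.1 ∈ Icc c (c+1) := by
    constructor
    · exact min_le_left _ _
    · rcases le_or_gt x₀.1 (R-1) with h | h
      · have : c = x₀.1 := by rw [hc, min_eq_left h]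
        linarith
      · have : c = R - 1 := by rw [hc, min_eq_right h.le]
        rw [this]; linarith [hx1.2]
  have hmem2 : x₀.2 ∈ Icc (0:ℝ) (0+1) := by
    constructor
    · exact hx2.1.le
    · rw [zero_add]; exact hx2.2.le
  set Q : Set (ℝ × ℝ) := Ioo c (c+1) ×ˢ Ioo (0:ℝ) 1 with hQ
  have hQ' : Ioo c (c+1) ×ˢ Ioo (0:ℝ) (0+1) = Q := by rw [zero_add]
  have hQsub : Q ⊆ Ioo (0:ℝ) R ×ˢ Ioo (0:ℝ) 1 :=
    prod_mono (Ioo_subset_Ioo hc0.le hcR) (subset_refl _)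
  have hQvol : volume Q = 1 := by
    rw [hQ, Measure.volume_eq_prod, Measure.prod_prod]
    simp
  -- the function and its derivatives
  set v := iteratedFDeriv ℝ i u with hv
  have hv2 : ContDiff ℝ 2 v := hu.iteratedFDeriv_right (by
      have h2 : ((2 + i : ℕ) : WithTop ℕ∞) ≤ ((M : ℕ) : WithTop ℕ∞) :=
        Nat.cast_le.mpr (by omega)
      push_cast at h2 ⊢
      convert h2 using 2 <;> norm_cast)
  have hn1 : ∀ x, ‖fderiv ℝ v x‖ = ‖iteratedFDeriv ℝ (i+1) u x‖ :=
    fun x => norm_fderiv_iteratedFDeriv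
  have hn2 : ∀ x, ‖fderiv ℝ (fderiv ℝ v) x‖ = ‖iteratedFDeriv ℝ (i+2) u x‖ :=
    fun x => norm_fderiv_fderiv_iteratedFDeriv u hu i hi x
  have hag := agmon2d v hv2 c 0 x₀ hmem1 hmem2
  rw [hQ'] at hag
  -- continuity of the derivative norms
  have hcont : ∀ j ≤ M, Continuous (fun x => ‖iteratedFDeriv ℝ j u x‖) := by
    intro j hj
    exact ((hu.iteratedFDeriv_right (m := 0) (by
      have h2 : ((0 + j : ℕ) : WithTop ℕ∞) ≤ ((M : ℕ) : WithTop ℕ∞) :=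
        Nat.cast_le.mpr (by omega)
      push_cast at h2 ⊢
      convert h2 using 2 <;> norm_cast)).continuous).norm
  -- weight comparison constant
  set W := Real.exp (2 * δ * (|x₀.1 - R/2| + 1)) with hW
  have hWpos : 0 < W := Real.exp_pos _
  set N := zNormSq M δ R u with hN
  have hterm_nonneg : ∀ j, 0 ≤ ∫ x in Ioo (0:ℝ) R ×ˢ Ioo (0:ℝ) 1,
      ‖iteratedFDeriv ℝ j u x‖ ^ 2 * Real.exp (-2 * δ * |x.1 - R / 2|) := by
    intro j
    apply setIntegral_nonneg (measurableSet_Ioo.prod measurableSet_Ioo)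
    intro x _
    positivity
  have hNnn : 0 ≤ N := by
    rw [hN, zNormSq]
    exact Finset.sum_nonneg fun j _ => hterm_nonneg j
  -- key bound for each derivative order j ≤ M :
  have key : ∀ j ≤ M, (∫ x in Q, ‖iteratedFDeriv ℝ j u x‖) ≤ Real.sqrt (W * N) := by
    intro j hj
    have hcj := hcont j hj
    have hQint : IntegrableOn (fun x => ‖iteratedFDeriv ℝ j u x‖ ^ 2) Q := by
      apply (((hcj.pow 2).continuousOn).integrableOn_compact
        (isCompact_Icc.prod isCompact_Icc)).mono_set
      exact prod_mono Ioo_subset_Icc_self Ioo_subset_Icc_self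
    have h1 : (∫ x in Q, ‖iteratedFDeriv ℝ j u x‖) ≤
        Real.sqrt (∫ x in Q, ‖iteratedFDeriv ℝ j u x‖ ^ 2) := by
      apply setIntegral_le_sqrt_sq _ (fun x => norm_nonneg _)
        (hcj.aestronglyMeasurable) hQint hQvol
    refine h1.trans (Real.sqrt_le_sqrt ?_)
    -- ∫_Q sq ≤ W * N
    have hpt : ∀ x ∈ Q, ‖iteratedFDeriv ℝ j u x‖ ^ 2 ≤
        W * (‖iteratedFDeriv ℝ j u x‖ ^ 2 * Real.exp (-2 * δ * |x.1 - R / 2|)) := by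
      intro x hxQ
      have hx1Q : x.1 ∈ Ioo c (c+1) := hxQ.1
      have habs : |x.1 - R/2| ≤ |x₀.1 - R/2| + 1 := by
        have h1 : |x.1 - R/2| ≤ |x₀.1 - R/2| + |x.1 - x₀.1| := by
          have := abs_sub_le (x.1) (x₀.1) (R/2)
          calc |x.1 - R/2| ≤ |x.1 - x₀.1| + |x₀.1 - R/2| := this
            _ = |x₀.1 - R/2| + |x.1 - x₀.1| := by ring
        have h2 : |x.1 - x₀.1| ≤ 1 := by
          rw [abs_sub_le_iff]
          constructor <;> [skip; skip] <;>
          · have := hx1Q.1; have := hx1Q.2; have := hmem1.1; have := hmem1.2; linarith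
        linarith
      have hw1 : (1:ℝ) ≤ W * Real.exp (-2 * δ * |x.1 - R / 2|) := by
        rw [hW, ← Real.exp_add]
        apply Real.one_le_exp
        nlinarith
      calc ‖iteratedFDeriv ℝ j u x‖ ^ 2 = ‖iteratedFDeriv ℝ j u x‖ ^ 2 * 1 := (mul_one _).symm
        _ ≤ ‖iteratedFDeriv ℝ j u x‖ ^ 2 * (W * Real.exp (-2 * δ * |x.1 - R / 2|)) :=
            mul_le_mul_of_nonneg_left hw1 (sq_nonneg _)
        _ = W * (‖iteratedFDeriv ℝ j u x‖ ^ 2 * Real.exp (-2 * δ * |x.1 - R / 2|)) := by ring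
    have hWint : IntegrableOn
        (fun x => W * (‖iteratedFDeriv ℝ j u x‖ ^ 2 * Real.exp (-2 * δ * |x.1 - R / 2|))) Q :=
      ((hint j hj).mono_set hQsub).const_mul W
    have h2 : (∫ x in Q, ‖iteratedFDeriv ℝ j u x‖ ^ 2) ≤
        ∫ x in Q, W * (‖iteratedFDeriv ℝ j u x‖ ^ 2 * Real.exp (-2 * δ * |x.1 - R / 2|)) :=
      setIntegral_mono_on hQint hWint (measurableSet_Ioo.prod measurableSet_Ioo) hpt
    have h3 : (∫ x in Q, W * (‖iteratedFDeriv ℝ j u x‖ ^ 2 * Real.exp (-2 * δ * |x.1 - R / 2|)))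
        = W * ∫ x in Q, ‖iteratedFDeriv ℝ j u x‖ ^ 2 * Real.exp (-2 * δ * |x.1 - R / 2|) :=
      integral_const_mul _ _
    have h4 : (∫ x in Q, ‖iteratedFDeriv ℝ j u x‖ ^ 2 * Real.exp (-2 * δ * |x.1 - R / 2|)) ≤
        ∫ x in Ioo (0:ℝ) R ×ˢ Ioo (0:ℝ) 1,
          ‖iteratedFDeriv ℝ j u x‖ ^ 2 * Real.exp (-2 * δ * |x.1 - R / 2|) := by
      apply setIntegral_mono_set (hint j hj)
        (ae_of_all _ fun x => by positivity)
        (HasSubset.Subset.eventuallyLE hQsub)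
    have h5 : (∫ x in Ioo (0:ℝ) R ×ˢ Ioo (0:ℝ) 1,
          ‖iteratedFDeriv ℝ j u x‖ ^ 2 * Real.exp (-2 * δ * |x.1 - R / 2|)) ≤ N := by
      rw [hN, zNormSq]
      apply Finset.single_le_sum (f := fun j => ∫ x in Set.Ioo (0:ℝ) R ×ˢ Set.Ioo (0:ℝ) 1,
        ‖iteratedFDeriv ℝ j u x‖ ^ 2 * Real.exp (-2 * δ * |x.1 - R / 2|))
        (fun j _ => hterm_nonneg j) (Finset.mem_range.2 (by omega))
    calc (∫ x in Q, ‖iteratedFDeriv ℝ j u x‖ ^ 2) ≤ _ := h2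
      _ = _ := h3
      _ ≤ W * N := by
        apply mul_le_mul_of_nonneg_left (h4.trans h5) hWpos.le
  -- assemble
  have hI0 : (∫ x in Q, ‖v x‖) ≤ Real.sqrt (W * N) := key i (by omega)
  have hI1 : (∫ x in Q, ‖fderiv ℝ v x‖) ≤ Real.sqrt (W * N) := by
    have : (∫ x in Q, ‖fderiv ℝ v x‖) = ∫ x in Q, ‖iteratedFDeriv ℝ (i+1) u x‖ := by
      congr 1; exact funext fun x => hn1 x
    rw [this]; exact key (i+1) (by omega)
  have hI2 : (∫ x in Q, ‖fderiv ℝ (fderiv ℝ v) x‖) ≤ Real.sqrt (W * N) := by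
    have : (∫ x in Q, ‖fderiv ℝ (fderiv ℝ v) x‖)
        = ∫ x in Q, ‖iteratedFDeriv ℝ (i+2) u x‖ := by
      congr 1; exact funext fun x => hn2 x
    rw [this]; exact key (i+2) (by omega)
  have hsqrtW : Real.sqrt (W * N) =
      Real.exp δ * Real.exp (δ * |x₀.1 - R/2|) * Real.sqrt N := by
    rw [Real.sqrt_mul hWpos.le]
    congr 1
    have : W = (Real.exp δ * Real.exp (δ * |x₀.1 - R/2|)) ^ 2 := by
      rw [← Real.exp_add, sq, ← Real.exp_add, hW]
      congr 1
      ring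
    rw [this, Real.sqrt_sq (by positivity)]
  calc ‖iteratedFDeriv ℝ i u x₀‖ = ‖v x₀‖ := rfl
    _ ≤ _ := hag
    _ ≤ Real.sqrt (W * N) + 2 * Real.sqrt (W * N) + Real.sqrt (W * N) := by
        gcongr
    _ = 4 * Real.sqrt (W * N) := by ring
    _ = 4 * Real.exp δ * Real.exp (δ * |x₀.1 - R/2|) * Real.sqrt N := by
        rw [hsqrtW]; ring

lemma main_estimate (m k : ℕ) (δ R : ℝ) (hδ : 0 ≤ δ) (hR : 2 ≤ R)
    (hm : 3 ≤ m) (hk : 2 ≤ k) (hkm : k ≤ m)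
    (q p : ℝ × ℝ → ℝ) (hq : memZ m δ R q) (hp : memZ k δ R p) :
    zNormSq k δ R (fun x => q x * p x) ≤
      ((k+1:ℝ)^3 * 4^k * (4 * Real.exp δ)^2) * Real.exp (δ * R) *
        zNormSq m δ R q * zNormSq k δ R p := by
  obtain ⟨hqC, -, hqI⟩ := hq
  obtain ⟨hpC, -, hpI⟩ := hp
  set D : Set (ℝ × ℝ) := Set.Ioo (0 : ℝ) R ×ˢ Set.Ioo (0 : ℝ) 1 with hD
  set w : ℝ × ℝ → ℝ := fun x => Real.exp (-2 * δ * |x.1 - R / 2|) with hw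
  have hDmeas : MeasurableSet D := measurableSet_Ioo.prod measurableSet_Ioo
  have hwc : Continuous w := by
    apply Real.continuous_exp.comp
    exact (continuous_const.mul ((continuous_fst.sub continuous_const).abs))
  have hwpos : ∀ x, 0 < w x := fun x => Real.exp_pos _
  have contD : ∀ g : ℝ × ℝ → ℝ, Continuous g → IntegrableOn g D := by
    intro g hg
    exact ((hg.continuousOn).integrableOn_compact (isCompact_Icc.prod isCompact_Icc)).mono_set
      (prod_mono Ioo_subset_Icc_self Ioo_subset_Icc_self)
  set K := 4 * Real.exp δ with hK
  have hKpos : 0 < K := by positivity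
  set Sq := Real.sqrt (zNormSq m δ R q) with hSq
  set Sp := Real.sqrt (zNormSq k δ R p) with hSp
  -- nonnegativity of norm pieces
  have hterm_nonneg : ∀ (u : ℝ × ℝ → ℝ) (j : ℕ), 0 ≤ ∫ x in D,
      ‖iteratedFDeriv ℝ j u x‖ ^ 2 * w x := by
    intro u j
    apply setIntegral_nonneg hDmeas; intro x _; positivity
  have hNq : 0 ≤ zNormSq m δ R q := Finset.sum_nonneg fun j _ => hterm_nonneg q j
  have hNp : 0 ≤ zNormSq k δ R p := Finset.sum_nonneg fun j _ => hterm_nonneg p j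
  have hSq2 : Sq ^ 2 = zNormSq m δ R q := Real.sq_sqrt hNq
  have hSp2 : Sp ^ 2 = zNormSq k δ R p := Real.sq_sqrt hNp
  have hSqnn : 0 ≤ Sq := Real.sqrt_nonneg _
  have hSpnn : 0 ≤ Sp := Real.sqrt_nonneg _
  -- continuity of iterated derivatives
  have hqcont : ∀ j ≤ m, Continuous (fun x => ‖iteratedFDeriv ℝ j q x‖) := fun j hj =>
    ((hqC.iteratedFDeriv_right (m := 0) (by
      simp only [zero_add]; exact_mod_cast hj)).continuous).norm
  have hpcont : ∀ j ≤ k, Continuous (fun x => ‖iteratedFDeriv ℝ j p x‖) := fun j hj =>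
    ((hpC.iteratedFDeriv_right (m := 0) (by
      simp only [zero_add]; exact_mod_cast hj)).continuous).norm
  have hqpC : ContDiff ℝ (k : ℕ∞) fun x => q x * p x :=
    (hqC.of_le (by exact_mod_cast hkm)).mul hpC
  have hqpcont : ∀ j ≤ k, Continuous (fun x => ‖iteratedFDeriv ℝ j (fun y => q y * p y) x‖) :=
    fun j hj =>
    ((hqpC.iteratedFDeriv_right (m := 0) (by
      simp only [zero_add]; exact_mod_cast hj)).continuous).norm
  -- sup bounds
  have hsupq : ∀ i, i + 2 ≤ m → ∀ x ∈ D, ‖iteratedFDeriv ℝ i q x‖ ≤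
      K * Real.exp (δ * |x.1 - R / 2|) * Sq := by
    intro i hi x hx
    have := sup_bound m i q δ R hδ hR hqC hqI hi x hx
    calc ‖iteratedFDeriv ℝ i q x‖ ≤ _ := this
      _ = K * Real.exp (δ * |x.1 - R / 2|) * Sq := by rw [hK]; all_goals ring
  have hsupp : ∀ i, i + 2 ≤ k → ∀ x ∈ D, ‖iteratedFDeriv ℝ i p x‖ ≤
      K * Real.exp (δ * |x.1 - R / 2|) * Sp := by
    intro i hi x hx
    have := sup_bound k i p δ R hδ hR hpC hpI hi x hx
    calc ‖iteratedFDeriv ℝ i p x‖ ≤ _ := this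
      _ = K * Real.exp (δ * |x.1 - R / 2|) * Sp := by rw [hK]; all_goals ring
  -- weight identities
  have hwEx : ∀ x : ℝ × ℝ, (Real.exp (δ * |x.1 - R / 2|)) ^ 2 * w x = 1 := by
    intro x
    rw [hw, sq, ← Real.exp_add, ← Real.exp_add, ← Real.exp_zero]
    congr 1; ring
  have hwlow : ∀ x ∈ D, (1:ℝ) ≤ Real.exp (δ * R) * w x := by
    intro x hx
    rw [hw, ← Real.exp_add]
    apply Real.one_le_exp
    have h1 : |x.1 - R / 2| ≤ R / 2 := by
      have := hx.1.1; have := hx.1.2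
      rw [abs_le]; constructor <;> linarith
    nlinarith
  -- single-term bounds
  have hsingle_q : ∀ j ≤ m, (∫ x in D, ‖iteratedFDeriv ℝ j q x‖ ^ 2 * w x) ≤ Sq ^ 2 := by
    intro j hj
    rw [hSq2, zNormSq]
    exact Finset.single_le_sum (f := fun j => ∫ x in D, ‖iteratedFDeriv ℝ j q x‖ ^ 2 * w x)
      (fun j _ => hterm_nonneg q j) (Finset.mem_range.2 (by omega))
  have hsingle_p : ∀ j ≤ k, (∫ x in D, ‖iteratedFDeriv ℝ j p x‖ ^ 2 * w x) ≤ Sp ^ 2 := by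
    intro j hj
    rw [hSp2, zNormSq]
    exact Finset.single_le_sum (f := fun j => ∫ x in D, ‖iteratedFDeriv ℝ j p x‖ ^ 2 * w x)
      (fun j _ => hterm_nonneg p j) (Finset.mem_range.2 (by omega))
  -- per (n, i) integral bound
  have per_i : ∀ n ≤ k, ∀ i ≤ n, (∫ x in D,
        ((n.choose i : ℝ) * ‖iteratedFDeriv ℝ i q x‖ * ‖iteratedFDeriv ℝ (n - i) p x‖) ^ 2 * w x)
      ≤ (n.choose i : ℝ)^2 * K^2 * Real.exp (δ * R) * Sq^2 * Sp^2 := by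
    intro n hn i hi
    rcases le_or_gt (i + 2) m with hcase | hcase
    · -- sup on q factor
      have hpt : ∀ x ∈ D,
          ((n.choose i : ℝ) * ‖iteratedFDeriv ℝ i q x‖ * ‖iteratedFDeriv ℝ (n - i) p x‖) ^ 2 * w x
          ≤ ((n.choose i : ℝ)^2 * K^2 * Sq^2 * Real.exp (δ * R)) *
              (‖iteratedFDeriv ℝ (n - i) p x‖ ^ 2 * w x) := by
        intro x hx
        have h1 := hsupq i hcase x hx
        have h2 := hwEx x
        have h3 := hwlow x hx
        have hwx := (hwpos x).le
        set A := ‖iteratedFDeriv ℝ i q x‖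
        set B := ‖iteratedFDeriv ℝ (n - i) p x‖
        set Ex := Real.exp (δ * |x.1 - R / 2|)
        have hA : (0:ℝ) ≤ A := norm_nonneg _
        have hB : (0:ℝ) ≤ B := norm_nonneg _
        have hEx : (0:ℝ) ≤ Ex := Real.exp_nonneg _
        have step1 : ((n.choose i : ℝ) * A * B) ^ 2 * w x ≤
            ((n.choose i : ℝ) * (K * Ex * Sq) * B) ^ 2 * w x := by
          apply mul_le_mul_of_nonneg_right _ hwx
          apply pow_le_pow_left₀ (by positivity)
          apply mul_le_mul_of_nonneg_right _ hB
          apply mul_le_mul_of_nonneg_left h1 (by positivity)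
        have step2 : ((n.choose i : ℝ) * (K * Ex * Sq) * B) ^ 2 * w x =
            ((n.choose i : ℝ)^2 * K^2 * Sq^2 * B^2) * (Ex^2 * w x) := by ring
        have step3 : ((n.choose i : ℝ)^2 * K^2 * Sq^2 * B^2) * (Ex^2 * w x) =
            (n.choose i : ℝ)^2 * K^2 * Sq^2 * B^2 := by rw [h2, mul_one]
        have step4 : (n.choose i : ℝ)^2 * K^2 * Sq^2 * B^2 ≤
            ((n.choose i : ℝ)^2 * K^2 * Sq^2 * B^2) * (Real.exp (δ * R) * w x) := by
          nth_rewrite 1 [← mul_one ((n.choose i : ℝ)^2 * K^2 * Sq^2 * B^2)]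
          apply mul_le_mul_of_nonneg_left h3 (by positivity)
        calc ((n.choose i : ℝ) * A * B) ^ 2 * w x ≤ _ := step1
          _ = _ := step2
          _ = _ := step3
          _ ≤ _ := step4
          _ = ((n.choose i : ℝ)^2 * K^2 * Sq^2 * Real.exp (δ * R)) * (B ^ 2 * w x) := by ring
      have hintR : IntegrableOn (fun x =>
          ((n.choose i : ℝ)^2 * K^2 * Sq^2 * Real.exp (δ * R)) *
            (‖iteratedFDeriv ℝ (n - i) p x‖ ^ 2 * w x)) D := by
        apply (contD _ ?_).const_mul
        exact ((hpcont (n - i) (by omega)).pow 2).mul hwc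
      have hintL : IntegrableOn (fun x =>
          ((n.choose i : ℝ) * ‖iteratedFDeriv ℝ i q x‖ * ‖iteratedFDeriv ℝ (n - i) p x‖) ^ 2
            * w x) D := by
        apply contD
        apply Continuous.mul _ hwc
        apply Continuous.pow
        exact (continuous_const.mul (hqcont i (by omega))).mul (hpcont (n - i) (by omega))
      calc (∫ x in D, ((n.choose i : ℝ) * ‖iteratedFDeriv ℝ i q x‖
              * ‖iteratedFDeriv ℝ (n - i) p x‖) ^ 2 * w x)
          ≤ ∫ x in D, ((n.choose i : ℝ)^2 * K^2 * Sq^2 * Real.exp (δ * R)) *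
              (‖iteratedFDeriv ℝ (n - i) p x‖ ^ 2 * w x) :=
            setIntegral_mono_on hintL hintR hDmeas hpt
        _ = ((n.choose i : ℝ)^2 * K^2 * Sq^2 * Real.exp (δ * R)) *
              ∫ x in D, ‖iteratedFDeriv ℝ (n - i) p x‖ ^ 2 * w x := integral_const_mul _ _
        _ ≤ ((n.choose i : ℝ)^2 * K^2 * Sq^2 * Real.exp (δ * R)) * Sp^2 := by
            apply mul_le_mul_of_nonneg_left (hsingle_p (n - i) (by omega)) (by positivity)
        _ = (n.choose i : ℝ)^2 * K^2 * Real.exp (δ * R) * Sq^2 * Sp^2 := by ring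
    · -- sup on p factor; here (n - i) + 2 ≤ k
      have hni : (n - i) + 2 ≤ k := by omega
      have hpt : ∀ x ∈ D,
          ((n.choose i : ℝ) * ‖iteratedFDeriv ℝ i q x‖ * ‖iteratedFDeriv ℝ (n - i) p x‖) ^ 2 * w x
          ≤ ((n.choose i : ℝ)^2 * K^2 * Sp^2 * Real.exp (δ * R)) *
              (‖iteratedFDeriv ℝ i q x‖ ^ 2 * w x) := by
        intro x hx
        have h1 := hsupp (n - i) hni x hx
        have h2 := hwEx x
        have h3 := hwlow x hx
        have hwx := (hwpos x).le
        set A := ‖iteratedFDeriv ℝ i q x‖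
        set B := ‖iteratedFDeriv ℝ (n - i) p x‖
        set Ex := Real.exp (δ * |x.1 - R / 2|)
        have hA : (0:ℝ) ≤ A := norm_nonneg _
        have hB : (0:ℝ) ≤ B := norm_nonneg _
        have hEx : (0:ℝ) ≤ Ex := Real.exp_nonneg _
        have step1 : ((n.choose i : ℝ) * A * B) ^ 2 * w x ≤
            ((n.choose i : ℝ) * A * (K * Ex * Sp)) ^ 2 * w x := by
          apply mul_le_mul_of_nonneg_right _ hwx
          apply pow_le_pow_left₀ (by positivity)
          apply mul_le_mul_of_nonneg_left h1 (by positivity)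
        have step2 : ((n.choose i : ℝ) * A * (K * Ex * Sp)) ^ 2 * w x =
            ((n.choose i : ℝ)^2 * K^2 * Sp^2 * A^2) * (Ex^2 * w x) := by ring
        have step3 : ((n.choose i : ℝ)^2 * K^2 * Sp^2 * A^2) * (Ex^2 * w x) =
            (n.choose i : ℝ)^2 * K^2 * Sp^2 * A^2 := by rw [h2, mul_one]
        have step4 : (n.choose i : ℝ)^2 * K^2 * Sp^2 * A^2 ≤
            ((n.choose i : ℝ)^2 * K^2 * Sp^2 * A^2) * (Real.exp (δ * R) * w x) := by
          nth_rewrite 1 [← mul_one ((n.choose i : ℝ)^2 * K^2 * Sp^2 * A^2)]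
          apply mul_le_mul_of_nonneg_left h3 (by positivity)
        calc ((n.choose i : ℝ) * A * B) ^ 2 * w x ≤ _ := step1
          _ = _ := step2
          _ = _ := step3
          _ ≤ _ := step4
          _ = ((n.choose i : ℝ)^2 * K^2 * Sp^2 * Real.exp (δ * R)) * (A ^ 2 * w x) := by ring
      have hintR : IntegrableOn (fun x =>
          ((n.choose i : ℝ)^2 * K^2 * Sp^2 * Real.exp (δ * R)) *
            (‖iteratedFDeriv ℝ i q x‖ ^ 2 * w x)) D := by
        apply (contD _ ?_).const_mul
        exact ((hqcont i (by omega)).pow 2).mul hwc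
      have hintL : IntegrableOn (fun x =>
          ((n.choose i : ℝ) * ‖iteratedFDeriv ℝ i q x‖ * ‖iteratedFDeriv ℝ (n - i) p x‖) ^ 2
            * w x) D := by
        apply contD
        apply Continuous.mul _ hwc
        apply Continuous.pow
        exact (continuous_const.mul (hqcont i (by omega))).mul (hpcont (n - i) (by omega))
      calc (∫ x in D, ((n.choose i : ℝ) * ‖iteratedFDeriv ℝ i q x‖
              * ‖iteratedFDeriv ℝ (n - i) p x‖) ^ 2 * w x)
          ≤ ∫ x in D, ((n.choose i : ℝ)^2 * K^2 * Sp^2 * Real.exp (δ * R)) *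
              (‖iteratedFDeriv ℝ i q x‖ ^ 2 * w x) :=
            setIntegral_mono_on hintL hintR hDmeas hpt
        _ = ((n.choose i : ℝ)^2 * K^2 * Sp^2 * Real.exp (δ * R)) *
              ∫ x in D, ‖iteratedFDeriv ℝ i q x‖ ^ 2 * w x := integral_const_mul _ _
        _ ≤ ((n.choose i : ℝ)^2 * K^2 * Sp^2 * Real.exp (δ * R)) * Sq^2 := by
            apply mul_le_mul_of_nonneg_left (hsingle_q i (by omega)) (by positivity)
        _ = (n.choose i : ℝ)^2 * K^2 * Real.exp (δ * R) * Sq^2 * Sp^2 := by ring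
  -- per n bound
  have per_n : ∀ n ≤ k, (∫ x in D, ‖iteratedFDeriv ℝ n (fun y => q y * p y) x‖ ^ 2 * w x)
      ≤ (k+1:ℝ)^2 * 4^k * K^2 * Real.exp (δ * R) * Sq^2 * Sp^2 := by
    intro n hn
    set a : ℕ → ℝ × ℝ → ℝ := fun i x =>
      (n.choose i : ℝ) * ‖iteratedFDeriv ℝ i q x‖ * ‖iteratedFDeriv ℝ (n - i) p x‖ with ha
    have hacont : ∀ i ≤ n, Continuous (a i) := fun i hi =>
      (continuous_const.mul (hqcont i (by omega))).mul (hpcont (n - i) (by omega))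
    have hannP : ∀ i x, 0 ≤ a i x := fun i x => by
      rw [ha]; positivity
    have hpt : ∀ x ∈ D, ‖iteratedFDeriv ℝ n (fun y => q y * p y) x‖ ^ 2 * w x ≤
        (n+1 : ℝ) * (∑ i ∈ Finset.range (n+1), (a i x)^2) * w x := by
      intro x hx
      have hlei : ‖iteratedFDeriv ℝ n (fun y => q y * p y) x‖ ≤
          ∑ i ∈ Finset.range (n+1), a i x :=
        norm_iteratedFDeriv_mul_le (hqC.of_le (by exact_mod_cast hkm : ((k:ℕ∞) : WithTop ℕ∞) ≤ ((m:ℕ∞) : WithTop ℕ∞)))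
          hpC x (by exact_mod_cast hn)
      have h2 : ‖iteratedFDeriv ℝ n (fun y => q y * p y) x‖ ^ 2 ≤
          (∑ i ∈ Finset.range (n+1), a i x) ^ 2 :=
        pow_le_pow_left₀ (norm_nonneg _) hlei 2
      have h3 : (∑ i ∈ Finset.range (n+1), a i x) ^ 2 ≤
          (n+1 : ℝ) * ∑ i ∈ Finset.range (n+1), (a i x)^2 := by
        have := sq_sum_le_card_mul_sum_sq (s := Finset.range (n+1)) (f := fun i => a i x)
        simpa using this
      apply mul_le_mul_of_nonneg_right ((h2.trans h3)) (hwpos x).le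
    have hintR : IntegrableOn (fun x =>
        (n+1 : ℝ) * (∑ i ∈ Finset.range (n+1), (a i x)^2) * w x) D := by
      apply contD
      apply Continuous.mul _ hwc
      apply continuous_const.mul
      apply continuous_finset_sum
      intro i hi
      exact (hacont i (by simpa [Nat.lt_succ_iff] using hi)).pow 2
    have hintL : IntegrableOn (fun x =>
        ‖iteratedFDeriv ℝ n (fun y => q y * p y) x‖ ^ 2 * w x) D := by
      apply contD
      exact ((hqpcont n hn).pow 2).mul hwc
    calc (∫ x in D, ‖iteratedFDeriv ℝ n (fun y => q y * p y) x‖ ^ 2 * w x)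
        ≤ ∫ x in D, (n+1 : ℝ) * (∑ i ∈ Finset.range (n+1), (a i x)^2) * w x :=
          setIntegral_mono_on hintL hintR hDmeas hpt
      _ = (n+1 : ℝ) * ∫ x in D, (∑ i ∈ Finset.range (n+1), (a i x)^2) * w x := by
          rw [← integral_const_mul]
          congr 1; funext x; ring
      _ = (n+1 : ℝ) * ∫ x in D, (∑ i ∈ Finset.range (n+1), (a i x)^2 * w x) := by
          congr 1; apply setIntegral_congr_fun hDmeas
          intro x _; simp only [Finset.sum_mul]
      _ = (n+1 : ℝ) * ∑ i ∈ Finset.range (n+1), ∫ x in D, (a i x)^2 * w x := by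
          congr 1
          apply integral_finset_sum
          intro i hi
          exact contD _ (((hacont i (by simpa [Nat.lt_succ_iff] using hi)).pow 2).mul hwc)
      _ ≤ (n+1 : ℝ) * ∑ i ∈ Finset.range (n+1),
            ((n.choose i : ℝ)^2 * K^2 * Real.exp (δ * R) * Sq^2 * Sp^2) := by
          apply mul_le_mul_of_nonneg_left _ (by positivity)
          apply Finset.sum_le_sum
          intro i hi
          exact per_i n hn i (by simpa [Nat.lt_succ_iff] using hi)
      _ ≤ (n+1 : ℝ) * ∑ i ∈ Finset.range (n+1),
            ((4:ℝ)^k * K^2 * Real.exp (δ * R) * Sq^2 * Sp^2) := by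
          apply mul_le_mul_of_nonneg_left _ (by positivity)
          apply Finset.sum_le_sum
          intro i hi
          have hin : i ≤ n := Nat.lt_succ_iff.mp (Finset.mem_range.1 hi)
          have hch : (n.choose i : ℝ) ≤ 2^k := by
            have h1 : n.choose i ≤ 2^n := by
              calc n.choose i ≤ ∑ j ∈ Finset.range (n+1), n.choose j :=
                    Finset.single_le_sum (fun _ _ => Nat.zero_le _)
                      (Finset.mem_range.2 (by omega))
                _ = 2^n := Nat.sum_range_choose n
            have h2 : (2:ℕ)^n ≤ 2^k := Nat.pow_le_pow_right (by norm_num) hn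
            exact_mod_cast h1.trans h2
          have : (n.choose i : ℝ)^2 ≤ (4:ℝ)^k := by
            calc (n.choose i : ℝ)^2 ≤ ((2:ℝ)^k)^2 :=
                  pow_le_pow_left₀ (by positivity) hch 2
              _ = 4^k := by rw [← pow_mul, mul_comm, pow_mul]; norm_num
          apply mul_le_mul_of_nonneg_right _ (by positivity)
          apply mul_le_mul_of_nonneg_right _ (by positivity)
          apply mul_le_mul_of_nonneg_right _ (by positivity)
          apply mul_le_mul_of_nonneg_right this (by positivity)
      _ = (n+1 : ℝ)^2 * ((4:ℝ)^k * K^2 * Real.exp (δ * R) * Sq^2 * Sp^2) := by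
          rw [Finset.sum_const, Finset.card_range]
          push_cast; ring
      _ ≤ (k+1:ℝ)^2 * 4^k * K^2 * Real.exp (δ * R) * Sq^2 * Sp^2 := by
          have h1 : (n+1:ℝ) ≤ (k+1:ℝ) := by exact_mod_cast Nat.succ_le_succ hn
          have h2 : (n+1:ℝ)^2 ≤ (k+1:ℝ)^2 := pow_le_pow_left₀ (by positivity) h1 2
          calc (n+1 : ℝ)^2 * ((4:ℝ)^k * K^2 * Real.exp (δ * R) * Sq^2 * Sp^2)
              ≤ (k+1 : ℝ)^2 * ((4:ℝ)^k * K^2 * Real.exp (δ * R) * Sq^2 * Sp^2) :=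
                mul_le_mul_of_nonneg_right h2 (by positivity)
            _ = (k+1:ℝ)^2 * 4^k * K^2 * Real.exp (δ * R) * Sq^2 * Sp^2 := by ring
  -- sum over n
  have : zNormSq k δ R (fun x => q x * p x) ≤
      ∑ n ∈ Finset.range (k+1), ((k+1:ℝ)^2 * 4^k * K^2 * Real.exp (δ * R) * Sq^2 * Sp^2) := by
    rw [zNormSq]
    apply Finset.sum_le_sum
    intro n hn
    exact per_n n (by simpa [Nat.lt_succ_iff] using hn)
  calc zNormSq k δ R (fun x => q x * p x) ≤ _ := this
    _ = (k+1:ℝ)^3 * 4^k * K^2 * Real.exp (δ * R) * Sq^2 * Sp^2 := by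
        rw [Finset.sum_const, Finset.card_range, nsmul_eq_mul]
        push_cast; try ring
    _ = ((k+1:ℝ)^3 * 4^k * (4 * Real.exp δ)^2) * Real.exp (δ * R) *
        zNormSq m δ R q * zNormSq k δ R p := by
        rw [hSq2, hSp2, hK]; try ring

end Aux

/-!
STATEMENT 17 (Banach module property).  For `m ≥ 3`, `2 ≤ k ≤ m`, `δ ≥ 0` there exists a
constant `C > 0`, independent of the gluing parameter `a` with `0 < |a| < 1/2`, such that
`⦀q·p⦀_{k,−δ} ≤ C·e^{δR/2}·⦀q⦀_{m,−δ}·⦀p⦀_{k,−δ}` for all `q ∈ H^m(Z_a,ℝ)` and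
`p ∈ H^k(Z_a,ℝ)`, where `R = φ(|a|)` with the exponential gluing profile
`φ(r) = e^{1/r} − e`.
-/
theorem weighted_banach_module_property_on_glued_cylinder
    (m k : ℕ) (δ : ℝ) (hm : 3 ≤ m) (hk : 2 ≤ k) (hkm : k ≤ m) (hδ : 0 ≤ δ) :
    ∃ C : ℝ, 0 < C ∧
      ∀ a : ℂ, 0 < ‖a‖ → ‖a‖ < 1 / 2 →
      ∀ R : ℝ, R = Real.exp (1 / ‖a‖) - Real.exp 1 →
      ∀ q p : ℝ × ℝ → ℝ, memZ m δ R q → memZ k δ R p →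
        Real.sqrt (zNormSq k δ R (fun x => q x * p x))
          ≤ C * Real.exp (δ * R / 2) * Real.sqrt (zNormSq m δ R q) *
              Real.sqrt (zNormSq k δ R p) := by
  set C₁ : ℝ := (k+1:ℝ)^3 * 4^k * (4 * Real.exp δ)^2 with hC₁
  have hC₁pos : 0 < C₁ := by rw [hC₁]; positivity
  refine ⟨Real.sqrt C₁, Real.sqrt_pos.2 hC₁pos, ?_⟩
  intro a ha1 ha2 R hRdef q p hq hp
  -- R ≥ 2
  have hR : 2 ≤ R := by
    have hainv : (2:ℝ) ≤ 1 / ‖a‖ := by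
      rw [le_div_iff₀ ha1]; linarith
    have hexp : Real.exp 2 ≤ Real.exp (1 / ‖a‖) := Real.exp_le_exp.2 hainv
    have he2 : Real.exp 2 = Real.exp 1 * Real.exp 1 := by
      rw [← Real.exp_add]; norm_num
    have h1 : Real.exp 1 < 2.7182818286 := Real.exp_one_lt_d9
    have h2 : 2.7182818283 < Real.exp 1 := Real.exp_one_gt_d9
    rw [hRdef]
    nlinarith
  -- nonnegativity of the norms
  have hterm_nonneg : ∀ (u : ℝ × ℝ → ℝ) (M : ℕ), 0 ≤ zNormSq M δ R u := by
    intro u M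
    apply Finset.sum_nonneg
    intro j _
    apply setIntegral_nonneg (measurableSet_Ioo.prod measurableSet_Ioo)
    intro x _
    positivity
  have hNq := hterm_nonneg q m
  have hNp := hterm_nonneg p k
  have hkey := main_estimate m k δ R hδ hR hm hk hkm q p hq hp
  have hstep : Real.sqrt (zNormSq k δ R (fun x => q x * p x)) ≤
      Real.sqrt (C₁ * Real.exp (δ * R) * zNormSq m δ R q * zNormSq k δ R p) :=
    Real.sqrt_le_sqrt hkey
  refine hstep.trans (le_of_eq ?_)
  have hsplit : Real.sqrt (C₁ * Real.exp (δ * R) * zNormSq m δ R q * zNormSq k δ R p)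
      = Real.sqrt C₁ * Real.sqrt (Real.exp (δ * R)) * Real.sqrt (zNormSq m δ R q) *
          Real.sqrt (zNormSq k δ R p) := by
    rw [Real.sqrt_mul (by positivity), Real.sqrt_mul (by positivity),
      Real.sqrt_mul hC₁pos.le]
  rw [hsplit]
  congr 2
  rw [show Real.exp (δ * R) = Real.exp (δ * R / 2) ^ 2 by
    rw [sq, ← Real.exp_add]; congr 1; ring]
  rw [Real.sqrt_sq (Real.exp_nonneg _)]
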